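/- Let Z be an integral domain and let p, q be non-associate irreducible elements of Z such that the quotient ring Z/(pZ ∩ qZ) is a finite local ring. Then the coprime Schinzel Hypothesis CopSch(1,1) fails for Z: there exist two nonzero polynomials P_1(t), P_2(t) ∈ Z[t], coprime in Q[t] where Q is the fraction field of Z, such that no non-unit of Z divides all values P_1(z), P_2(z) (z ∈ Z), and yet for every m ∈ Z the elements P_1(m) and P_2(m) have a common non-unit divisor in Z. -/
import Mathlib


theorem copschinzel_fails_local_quotient
    (Z : Type*) [CommRing Z] [IsDomain Z]
    (p q : Z) (hp : Irreducible p) (hq : Irreducible q)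
    (hpq : ¬ Associated p q)
    (hloc : IsLocalRing (Z ⧸ (Ideal.span {p} ⊓ Ideal.span {q})))
    (hfin : Finite (Z ⧸ (Ideal.span {p} ⊓ Ideal.span {q}))) :
    ∃ P₁ P₂ : Polynomial Z, P₁ ≠ 0 ∧ P₂ ≠ 0 ∧
      (∀ d : Polynomial (FractionRing Z),
        d ∣ P₁.map (algebraMap Z (FractionRing Z)) →
        d ∣ P₂.map (algebraMap Z (FractionRing Z)) → IsUnit d) ∧
      (∀ a : Z, (∀ z : Z, a ∣ P₁.eval z ∧ a ∣ P₂.eval z) → IsUnit a) ∧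
      (∀ m : Z, ∃ d : Z, ¬ IsUnit d ∧ d ∣ P₁.eval m ∧ d ∣ P₂.eval m) := by
  classical
  set I : Ideal Z := Ideal.span {p} ⊓ Ideal.span {q} with hI
  set R := Z ⧸ I with hR
  -- nilpotency exponent of the maximal ideal
  obtain ⟨N, hN⟩ : IsNilpotent (IsLocalRing.maximalIdeal R) := by
    have := IsArtinianRing.isNilpotent_jacobson_bot (R := R)
    rwa [IsLocalRing.jacobson_eq_maximalIdeal (⊥ : Ideal R) bot_ne_top] at this
  set c : ℕ := Nat.card Rˣ with hc
  have hc1 : 1 ≤ c := Nat.card_pos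
  have hN1 : 1 ≤ N := by
    rcases Nat.eq_zero_or_pos N with h | h
    · exfalso
      rw [h, pow_zero, Ideal.one_eq_top] at hN
      have h1 : (1 : R) ∈ (0 : Ideal R) := hN ▸ Submodule.mem_top
      exact (one_ne_zero (α := R)) (by simpa using h1)
    · exact h
  set E : ℕ := N * c with hE
  have hE1 : 1 ≤ E := Nat.one_le_iff_ne_zero.mpr (by positivity)
  -- the polynomials
  set P₁ : Polynomial Z := Polynomial.C (p * q) with hP₁
  set P₂ : Polynomial Z := Polynomial.C p * Polynomial.X ^ E
      + Polynomial.C q * (1 - Polynomial.X ^ E) with hP₂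
  have hp0 : p ≠ 0 := hp.ne_zero
  have hq0 : q ≠ 0 := hq.ne_zero
  have heval : ∀ z : Z, P₂.eval z = p * z ^ E + q * (1 - z ^ E) := by
    intro z; simp [hP₂]
  have heval1 : P₂.eval 1 = p := by rw [heval]; ring
  have heval0 : P₂.eval 0 = q := by
    rw [heval, zero_pow (by omega)]; ring
  -- key fact: associate of p from nonunit divisor
  have hassoc : ∀ a : Z, ¬ IsUnit a → a ∣ p → a ∣ q → False := by
    intro a ha hap haq
    obtain ⟨b, hb⟩ := hap
    obtain ⟨d, hd⟩ := haq
    have hbu : IsUnit b := (hp.isUnit_or_isUnit hb).resolve_left ha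
    have hdu : IsUnit d := (hq.isUnit_or_isUnit hd).resolve_left ha
    have h1 : Associated a p := ⟨hbu.unit, by rw [IsUnit.unit_spec]; exact hb.symm⟩
    have h2 : Associated a q := ⟨hdu.unit, by rw [IsUnit.unit_spec]; exact hd.symm⟩
    exact hpq (h1.symm.trans h2)
  refine ⟨P₁, P₂, ?_, ?_, ?_, ?_, ?_⟩
  · intro h
    exact mul_ne_zero hp0 hq0 (by simpa [hP₁, Polynomial.C_eq_zero] using h)
  · intro h
    have : P₂.eval 1 = 0 := by rw [h]; simp
    rw [heval1] at this
    exact hp0 this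
  · -- coprime over the fraction field: P₁ maps to a nonzero constant
    intro d hd₁ _
    have hmap : P₁.map (algebraMap Z (FractionRing Z))
        = Polynomial.C (algebraMap Z (FractionRing Z) (p * q)) := by
      simp [hP₁]
    have hne : algebraMap Z (FractionRing Z) (p * q) ≠ 0 := by
      intro h
      exact mul_ne_zero hp0 hq0 (IsFractionRing.injective Z (FractionRing Z) (by simpa using h))
    have : IsUnit (P₁.map (algebraMap Z (FractionRing Z))) := by
      rw [hmap]
      exact Polynomial.isUnit_C.mpr (isUnit_iff_ne_zero.mpr hne)
    exact isUnit_of_dvd_unit hd₁ this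
  · -- no fixed common divisor
    intro a ha
    by_contra hau
    have h1 := (ha 1).2
    have h0 := (ha 0).2
    rw [heval1] at h1
    rw [heval0] at h0
    exact hassoc a hau h1 h0
  · -- every value pair has a common nonunit divisor
    intro m
    set π : Z →+* R := Ideal.Quotient.mk I with hπ
    have hIp : I ≤ Ideal.span {p} := inf_le_left
    have hIq : I ≤ Ideal.span {q} := inf_le_right
    by_cases hu : IsUnit (π m)
    · -- unit case: p divides both values
      refine ⟨p, hp.not_isUnit, ?_, ?_⟩
      · simpa [hP₁] using dvd_mul_right p q
      · -- 1 - m ^ E ∈ I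
        have hπ1 : π (1 - m ^ E) = 0 := by
          obtain ⟨u, hu'⟩ := hu
          have huc : u ^ c = 1 := by rw [hc]; exact pow_card_eq_one'
          have : (u : R) ^ E = 1 := by
            rw [hE, mul_comm, pow_mul, ← Units.val_pow_eq_pow_val, huc,
              Units.val_one, one_pow]
          simp [map_sub, map_pow, hu'.symm ▸ this]
        have hmem : 1 - m ^ E ∈ I := Ideal.Quotient.eq_zero_iff_mem.mp hπ1
        have hpd : p ∣ 1 - m ^ E := Ideal.mem_span_singleton.mp (hIp hmem)
        rw [heval]
        exact dvd_add (Dvd.intro _ rfl) (Dvd.dvd.mul_left hpd q)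
    · -- nonunit case: q divides both values
      refine ⟨q, hq.not_isUnit, ?_, ?_⟩
      · simpa [hP₁] using dvd_mul_left q p
      · have hmM : π m ∈ IsLocalRing.maximalIdeal R := hu
        have hπm : π (m ^ E) = 0 := by
          have h1 : (π m) ^ N ∈ (IsLocalRing.maximalIdeal R) ^ N :=
            Ideal.pow_mem_pow hmM N
          rw [hN] at h1
          have h2 : (π m) ^ N = 0 := by simpa using h1
          rw [map_pow, hE, pow_mul, h2, zero_pow (by omega)]
        have hmem : m ^ E ∈ I := Ideal.Quotient.eq_zero_iff_mem.mp hπm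
        have hqd : q ∣ m ^ E := Ideal.mem_span_singleton.mp (hIq hmem)
        rw [heval]
        exact dvd_add (Dvd.dvd.mul_left hqd p) (Dvd.intro _ rfl)
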